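/- Under the hypotheses of the relation-theoretic Boyd-Wong theorem (R-completeness of (X,d); R T-closed and locally T-transitive; T R-continuous or R d-self-closed; X(T,R) nonempty; φ ∈ Ω with d(Tx,Ty) ≤ φ(d(x,y)) whenever (x,y) ∈ R), if additionally T(X) is R^s-connected, then T has a unique fixed point. -/

import Mathlib

open Filter

variable {X : Type*}

def RPreserving (R : Set (X × X)) (x : ℕ → X) : Prop :=
  ∀ n : ℕ, (x n, x (n + 1)) ∈ R

def LocallyTTransitive (R : Set (X × X)) (T : X → X) : Prop :=
  ∀ x : ℕ → X, (∀ n : ℕ, x n ∈ Set.range T) → RPreserving R x →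
    ∀ a b c : X, a ∈ Set.range x → b ∈ Set.range x → c ∈ Set.range x →
      (a, b) ∈ R → (b, c) ∈ R → (a, c) ∈ R

def DSelfClosed [MetricSpace X] (R : Set (X × X)) : Prop :=
  ∀ (x : ℕ → X) (l : X), RPreserving R x → Tendsto x atTop (nhds l) →
    ∃ k : ℕ → ℕ, StrictMono k ∧ ∀ i : ℕ, (x (k i), l) ∈ R ∨ (l, x (k i)) ∈ R

/-- `E` is `R^s`-connected: any two points of `E` are joined by a finite path whose
consecutive terms are `R^s`-related. -/
def RsConnected (R : Set (X × X)) (E : Set X) : Prop :=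
  ∀ x ∈ E, ∀ y ∈ E, ∃ (k : ℕ) (z : ℕ → X), z 0 = x ∧ z k = y ∧
    ∀ i < k, (z i, z (i + 1)) ∈ R ∨ (z (i + 1), z i) ∈ R

/-- Theorem 3.3: under the hypotheses of the relation-theoretic Boyd–Wong theorem, if
additionally `T(X)` is `R^s`-connected, then `T` has a unique fixed point. -/

lemma aux_phi_bound {φ : ℝ → ℝ} (hφ1 : ∀ t : ℝ, 0 < t → φ t < t)
    (hφ2 : ∀ t : ℝ, 0 < t → limsup φ (nhdsWithin t (Set.Ioi t)) < t)
    {r : ℝ} (hr : 0 < r) :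
    ∃ c < r, ∀ᶠ s in nhdsWithin r (Set.Ioi r), φ s < c := by
  have hev' : ∀ᶠ s in nhdsWithin r (Set.Ioi r), φ s ≤ r + 1 := by
    filter_upwards [Ioo_mem_nhdsGT_of_mem
      (show r ∈ Set.Ico r (r + 1) from Set.left_mem_Ico.2 (by linarith))] with s hs
    exact (hφ1 s (hr.trans hs.1)).le.trans hs.2.le
  have hbdd : IsBoundedUnder (· ≤ ·) (nhdsWithin r (Set.Ioi r)) φ :=
    ⟨r + 1, eventually_map.2 hev'⟩
  have hL := hφ2 r hr
  refine ⟨(limsup φ (nhdsWithin r (Set.Ioi r)) + r) / 2, by linarith, ?_⟩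
  exact eventually_lt_of_limsup_lt (by linarith) hbdd

lemma iterate_dist_tendsto [MetricSpace X] {R : Set (X × X)} {T : X → X}
    (hTclosed : ∀ x y : X, (x, y) ∈ R → (T x, T y) ∈ R)
    {φ : ℝ → ℝ} (hφ1 : ∀ t : ℝ, 0 < t → φ t < t)
    (hφ2 : ∀ t : ℝ, 0 < t → limsup φ (nhdsWithin t (Set.Ioi t)) < t)
    (hcontr : ∀ x y : X, (x, y) ∈ R → dist (T x) (T y) ≤ φ (dist x y))
    {u v : X} (huv : (u, v) ∈ R) :
    Tendsto (fun n => dist (T^[n] u) (T^[n] v)) atTop (nhds 0) := by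
  set a : ℕ → ℝ := fun n => dist (T^[n] u) (T^[n] v) with ha
  have hR : ∀ n, (T^[n] u, T^[n] v) ∈ R := by
    intro n
    induction n with
    | zero => exact huv
    | succ n ih => simpa [Function.iterate_succ_apply'] using hTclosed _ _ ih
  have hstep : ∀ n, 0 < a n → a (n + 1) ≤ φ (a n) := by
    intro n _
    have := hcontr _ _ (hR n)
    simpa [ha, Function.iterate_succ_apply'] using this
  have hmono : ∀ n, a (n + 1) ≤ a n := by
    intro n
    rcases eq_or_lt_of_le (dist_nonneg : (0:ℝ) ≤ a n) with h | h
    · have heq : T^[n] u = T^[n] v := by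
        have : dist (T^[n] u) (T^[n] v) ≤ 0 := le_of_eq h.symm
        exact dist_le_zero.mp this
      have : a (n + 1) = 0 := by
        simp [ha, Function.iterate_succ_apply', heq]
      rw [this]; exact dist_nonneg
    · exact (hstep n h).trans (hφ1 _ h).le
  have hanti : Antitone a := antitone_nat_of_succ_le hmono
  have hbdd : BddBelow (Set.range a) := ⟨0, by rintro x ⟨n, rfl⟩; exact dist_nonneg⟩
  have hlim : Tendsto a atTop (nhds (⨅ n, a n)) := tendsto_atTop_ciInf hanti hbdd
  have hr0 : (0:ℝ) ≤ ⨅ n, a n := le_ciInf fun n => dist_nonneg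
  rcases eq_or_lt_of_le hr0 with h | h
  · rw [← h] at hlim; exact hlim
  · exfalso
    set r := ⨅ n, a n with hrdef
    have hge : ∀ n, r ≤ a n := fun n => ciInf_le hbdd n
    have hgt : ∀ n, r < a n := by
      intro n
      rcases eq_or_lt_of_le (hge n) with he | h'
      · exfalso
        have hpos : 0 < a n := he ▸ h
        have h1 : a (n + 1) ≤ φ (a n) := hstep n hpos
        have h2 : φ (a n) < a n := hφ1 _ hpos
        have h3 := hge (n + 1)
        rw [← he] at h1 h2
        linarith
      · exact h'
    obtain ⟨c, hc, hev⟩ := aux_phi_bound hφ1 hφ2 h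
    have htend : Tendsto a atTop (nhdsWithin r (Set.Ioi r)) := by
      rw [tendsto_nhdsWithin_iff]
      exact ⟨hlim, Eventually.of_forall fun n => hgt n⟩
    obtain ⟨n, hn⟩ := (htend.eventually hev).exists
    have h1 : a (n + 1) ≤ φ (a n) := hstep n (h.trans (hgt n))
    have h3 := hge (n + 1)
    linarith

/-- Theorem 3.3: under the hypotheses of the relation-theoretic Boyd–Wong theorem, if
additionally `T(X)` is `R^s`-connected, then `T` has a unique fixed point. -/
theorem stmt_13 [MetricSpace X] (R : Set (X × X)) (T : X → X)
    (hcomp : ∀ x : ℕ → X, RPreserving R x → CauchySeq x → ∃ l : X, Tendsto x atTop (nhds l))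
    (hTclosed : ∀ x y : X, (x, y) ∈ R → (T x, T y) ∈ R)
    (htrans : LocallyTTransitive R T)
    (hcont : (∀ (x : ℕ → X) (l : X), RPreserving R x → Tendsto x atTop (nhds l) →
      Tendsto (fun n => T (x n)) atTop (nhds (T l))) ∨ DSelfClosed R)
    (x₀ : X) (hx₀ : (x₀, T x₀) ∈ R)
    (φ : ℝ → ℝ) (hφ0 : ∀ t : ℝ, 0 ≤ t → 0 ≤ φ t)
    (hφ1 : ∀ t : ℝ, 0 < t → φ t < t)
    (hφ2 : ∀ t : ℝ, 0 < t → limsup φ (nhdsWithin t (Set.Ioi t)) < t)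
    (hcontr : ∀ x y : X, (x, y) ∈ R → dist (T x) (T y) ≤ φ (dist x y))
    (hconn : RsConnected R (Set.range T)) :
    ∃! x : X, T x = x := by
  classical
  -- a general "distance contracts under one step" fact
  have hdle : ∀ a b : X, (a, b) ∈ R → dist (T a) (T b) ≤ dist a b := by
    intro a b hab
    rcases eq_or_lt_of_le (dist_nonneg : (0:ℝ) ≤ dist a b) with h0 | h0
    · have : a = b := dist_le_zero.mp (le_of_eq h0.symm)
      simp [this]
    · exact (hcontr _ _ hab).trans (hφ1 _ h0).le
  -- uniqueness of fixed points via Rˢ-connectedness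
  have huniq : ∀ u v : X, T u = u → T v = v → u = v := by
    intro u v hu hv
    obtain ⟨k, z, hz0, hzk, hzR⟩ := hconn u ⟨u, hu⟩ v ⟨v, hv⟩
    have hterm : ∀ i, i < k →
        Tendsto (fun n => dist (T^[n] (z i)) (T^[n] (z (i + 1)))) atTop (nhds 0) := by
      intro i hi
      rcases hzR i hi with h | h
      · exact iterate_dist_tendsto hTclosed hφ1 hφ2 hcontr h
      · have := iterate_dist_tendsto hTclosed hφ1 hφ2 hcontr h
        simpa [dist_comm] using this
    have hsum : Tendsto
        (fun n => ∑ i ∈ Finset.range k, dist (T^[n] (z i)) (T^[n] (z (i + 1))))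
        atTop (nhds 0) := by
      have := tendsto_finset_sum (Finset.range k)
        (fun i hi => hterm i (Finset.mem_range.mp hi))
      simpa using this
    have hle : ∀ n, dist u v ≤
        ∑ i ∈ Finset.range k, dist (T^[n] (z i)) (T^[n] (z (i + 1))) := by
      intro n
      have h := dist_le_range_sum_dist (fun i => T^[n] (z i)) k
      simp only [hz0, hzk] at h
      rwa [Function.iterate_fixed hu, Function.iterate_fixed hv] at h
    have : dist u v ≤ 0 := ge_of_tendsto' hsum hle
    exact dist_le_zero.mp this
  -- the Picard sequence (starting at T x₀, so it stays in the range of T)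
  set y : ℕ → X := fun n => T^[n] (T x₀) with hy
  have hTy : ∀ n, T (y n) = y (n + 1) := by
    intro n
    simp only [hy]
    exact (Function.iterate_succ_apply' T n (T x₀)).symm
  have hyr : ∀ n, y n ∈ Set.range T := by
    intro n
    cases n with
    | zero => exact ⟨x₀, rfl⟩
    | succ n => exact ⟨y n, hTy n⟩
  have hTR : (T x₀, T (T x₀)) ∈ R := hTclosed _ _ hx₀
  have hpres : RPreserving R y := by
    intro n
    induction n with
    | zero => simpa [hy] using hTR
    | succ n ih =>
      have := hTclosed _ _ ih
      rw [hTy n, hTy (n + 1)] at this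
      exact this
  have htrans' : ∀ m n, m < n → (y m, y n) ∈ R := by
    intro m n hmn
    induction n with
    | zero => omega
    | succ n ih =>
      rcases Nat.lt_succ_iff_lt_or_eq.mp hmn with h | h
      · exact htrans y hyr hpres (y m) (y n) (y (n + 1)) ⟨m, rfl⟩ ⟨n, rfl⟩ ⟨n + 1, rfl⟩
          (ih h) (hpres n)
      · subst h; exact hpres m
  -- consecutive distances tend to 0
  have hd0 : Tendsto (fun n => dist (y n) (y (n + 1))) atTop (nhds 0) := by
    have h := iterate_dist_tendsto hTclosed hφ1 hφ2 hcontr hTR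
    have he : (fun n => dist (T^[n] (T x₀)) (T^[n] (T (T x₀))))
        = fun n => dist (y n) (y (n + 1)) := by
      funext n
      simp only [hy]
      rw [← Function.iterate_succ_apply T n (T x₀)]
    rwa [he] at h
  -- the Picard sequence is Cauchy (Boyd–Wong argument)
  have hcauchy : CauchySeq y := by
    rw [Metric.cauchySeq_iff]
    by_contra hc
    push_neg at hc
    obtain ⟨ε, hε, hcc⟩ := hc
    obtain ⟨c, hcε, hev⟩ := aux_phi_bound hφ1 hφ2 hε
    obtain ⟨δ, hδ, hball⟩ := Metric.mem_nhdsWithin_iff.mp hev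
    set c' : ℝ := max c (φ ε) with hc'def
    have hc' : c' < ε := max_lt hcε (hφ1 ε hε)
    have hc'0 : (0:ℝ) ≤ c' := le_trans (hφ0 ε hε.le) (le_max_right _ _)
    have hφr : ∀ s : ℝ, ε ≤ s → s < ε + δ → φ s ≤ c' := by
      intro s h1 h2
      rcases eq_or_lt_of_le h1 with he | hlt
      · rw [← he]; exact le_max_right _ _
      · have hs : s ∈ Metric.ball ε δ ∩ Set.Ioi ε := by
          constructor
          · rw [Metric.mem_ball, Real.dist_eq, abs_lt]
            constructor <;> linarith
          · exact hlt
        exact (hball hs).le.trans (le_max_left _ _)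
    set η : ℝ := min δ (ε - c') with hηdef
    have hη : 0 < η := lt_min hδ (by linarith)
    have hηδ : η ≤ δ := min_le_left _ _
    have hηε : η ≤ ε - c' := min_le_right _ _
    obtain ⟨N, hN⟩ := eventually_atTop.mp
      (hd0.eventually (gt_mem_nhds (show (0:ℝ) < η / 3 by linarith)))
    have main : ∀ p q, N ≤ p → p < q → dist (y p) (y q) < ε := by
      intro p q hp hq
      by_contra hge
      push_neg at hge
      have hex : ∃ q', p < q' ∧ ε ≤ dist (y p) (y q') := ⟨q, hq, hge⟩
      set q0 := Nat.find hex with hq0def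
      obtain ⟨hq0p, hq0d⟩ := Nat.find_spec hex
      rw [← hq0def] at hq0p hq0d
      have h1 : p + 1 < q0 := by
        rcases Nat.lt_or_ge (p + 1) q0 with h | h
        · exact h
        · exfalso
          have he : q0 = p + 1 := le_antisymm h hq0p
          rw [he] at hq0d
          have := hN p hp
          linarith
      have hprev : dist (y p) (y (q0 - 1)) < ε := by
        by_contra hge2
        push_neg at hge2
        exact Nat.find_min hex (show q0 - 1 < q0 by omega) ⟨by omega, hge2⟩
      have hd1 : dist (y (q0 - 1)) (y q0) < η / 3 := by
        have h := hN (q0 - 1) (by omega)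
        have he : q0 - 1 + 1 = q0 := by omega
        rwa [he] at h
      have hrange : dist (y p) (y q0) < ε + δ := by
        have htri := dist_triangle (y p) (y (q0 - 1)) (y q0)
        linarith
      have hφr' : φ (dist (y p) (y q0)) ≤ c' := hφr _ hq0d hrange
      have hcontr' : dist (y (p + 1)) (y (q0 + 1)) ≤ φ (dist (y p) (y q0)) := by
        have := hcontr _ _ (htrans' p q0 hq0p)
        rwa [hTy p, hTy q0] at this
      have htri4 := dist_triangle4 (y p) (y (p + 1)) (y (q0 + 1)) (y q0)
      have hdp := hN p hp
      have hdq : dist (y (q0 + 1)) (y q0) < η / 3 := by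
        rw [dist_comm]; exact hN q0 (by omega)
      linarith
    obtain ⟨m, hm, n, hn, hdist⟩ := hcc N
    rcases lt_trichotomy m n with h | h | h
    · exact absurd (main m n hm h) (not_lt.mpr hdist)
    · subst h; simp at hdist; linarith
    · have := main n m hn h
      rw [dist_comm] at this
      linarith
  obtain ⟨l, hl⟩ := hcomp y hpres hcauchy
  have hfix : T l = l := by
    rcases hcont with hc | hc
    · have h1 : Tendsto (fun n => T (y n)) atTop (nhds (T l)) := hc y l hpres hl
      have h2 : Tendsto (fun n => T (y n)) atTop (nhds l) := by
        have h3 : Tendsto (fun n => y (n + 1)) atTop (nhds l) :=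
          hl.comp (tendsto_add_atTop_nat 1)
        have he : (fun n => T (y n)) = fun n => y (n + 1) := funext fun n => hTy n
        rwa [he]
      exact tendsto_nhds_unique h1 h2
    · obtain ⟨k, hk, hki⟩ := hc y l hpres hl
      have hle : ∀ i, dist (T (y (k i))) (T l) ≤ dist (y (k i)) l := by
        intro i
        rcases hki i with h | h
        · exact hdle _ _ h
        · calc dist (T (y (k i))) (T l) = dist (T l) (T (y (k i))) := dist_comm _ _
            _ ≤ dist l (y (k i)) := hdle _ _ h
            _ = dist (y (k i)) l := dist_comm _ _
      have hsub : Tendsto (fun i => y (k i)) atTop (nhds l) :=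
        hl.comp hk.tendsto_atTop
      have hdist0 : Tendsto (fun i => dist (y (k i)) l) atTop (nhds 0) := by
        have := hsub.dist (tendsto_const_nhds : Tendsto (fun _ : ℕ => l) atTop (nhds l))
        simpa using this
      have hT0 : Tendsto (fun i => dist (T (y (k i))) (T l)) atTop (nhds 0) :=
        squeeze_zero (fun i => dist_nonneg) hle hdist0
      have hT1 : Tendsto (fun i => T (y (k i))) atTop (nhds (T l)) :=
        tendsto_iff_dist_tendsto_zero.mpr hT0
      have hT2 : Tendsto (fun i => T (y (k i))) atTop (nhds l) := by
        have hk1 : Tendsto (fun i => k i + 1) atTop atTop :=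
          tendsto_atTop_mono (fun n => Nat.le_succ _) hk.tendsto_atTop
        have := hl.comp hk1
        have he : (fun i => T (y (k i))) = fun i => y (k i + 1) :=
          funext fun i => hTy (k i)
        rwa [he]
      exact tendsto_nhds_unique hT1 hT2
  exact ⟨l, hfix, fun u hu => huniq u l hu hfix⟩
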